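/- Let Ω be a neighborhood of the origin in ℂ and Φ : Ω → ℝ a function with Φ(w) ≥ 0 for all w ∈ Ω. Suppose there is an even positive integer n = 2m and complex constants c₀, …, cₙ such that Φ(w) = Σ_{p=0}^{n} c_p · w^p · conj(w)^{n−p} + O(|w|^{n+1}) as |w| → 0. Then c_m is a non-negative real number, and if c_m = 0 then c_p = 0 for all p. -/

import Mathlib

open Complex Finset

lemma aux_exp_pow (θ : ℝ) (n p : ℕ) (hp : p ≤ n) :
    Complex.exp (θ * Complex.I) ^ p *
      (starRingEnd ℂ (Complex.exp (θ * Complex.I))) ^ (n - p) =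
    Complex.exp (((2 * p - n : ℤ) : ℂ) * θ * Complex.I) := by
  rw [← Complex.exp_conj]
  have h1 : (starRingEnd ℂ) ((θ : ℂ) * Complex.I) = -(θ * Complex.I) := by
    simp [Complex.conj_I]
  rw [h1, ← Complex.exp_nat_mul, ← Complex.exp_nat_mul, ← Complex.exp_add]
  congr 1
  have h2 : ((n - p : ℕ) : ℂ) = (n : ℂ) - p := by
    push_cast [Nat.cast_sub hp]; ring
  rw [h2]; push_cast; ring

lemma aux_geom (N : ℕ) (d : ℤ) (hd : d ≠ 0) (hdN : d.natAbs < N) :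
    ∑ k ∈ Finset.range N, Complex.exp ((d : ℂ) * (2 * Real.pi * Complex.I / N)) ^ k = 0 := by
  have hN : (N : ℂ) ≠ 0 := by
    have : 0 < N := lt_of_le_of_lt (Nat.zero_le _) hdN; exact_mod_cast this.ne'
  set u := Complex.exp ((d : ℂ) * (2 * Real.pi * Complex.I / N)) with hu
  have huN : u ^ N = 1 := by
    rw [hu, ← Complex.exp_nat_mul]
    rw [Complex.exp_eq_one_iff]
    exact ⟨d, by field_simp⟩
  have hu1 : u ≠ 1 := by
    intro h
    rw [hu, Complex.exp_eq_one_iff] at h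
    obtain ⟨k, hk⟩ := h
    have h2πI : (2 * (Real.pi : ℂ) * Complex.I) ≠ 0 := by
      simp [Real.pi_ne_zero, Complex.I_ne_zero]
    have : (d : ℂ) = k * N := by
      field_simp at hk
      have : (d : ℂ) * (2 * Real.pi * Complex.I) = (k * N) * (2 * Real.pi * Complex.I) := by
        rw [hk]; ring
      exact mul_right_cancel₀ h2πI this
    have hdk : d = k * N := by exact_mod_cast this
    have hk0 : k ≠ 0 := by
      rintro rfl; simp at hdk; exact hd hdk
    have : (N : ℤ) ≤ d.natAbs := by
      rw [hdk]
      calc (N : ℤ) = 1 * N := by ring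
      _ ≤ |k| * N := by
        apply mul_le_mul_of_nonneg_right _ (by positivity)
        exact Int.one_le_abs hk0
      _ = (k * N).natAbs := by
        rw [Int.natAbs_mul]; push_cast [abs_mul]; simp [Int.abs_natCast]
    omega
  rw [geom_sum_eq hu1, huN]
  simp

/-- If `Φ ≥ 0` near `0 ∈ ℂ` and `Φ(w) = ∑_{p=0}^{n} c_p w^p conj(w)^{n-p} + O(|w|^{n+1})`
with `n = 2m` even and positive, then `c_m` is a non-negative real number, and if
`c_m = 0` then all coefficients vanish. -/
theorem stmt1 (Ω : Set ℂ) (hΩ : Ω ∈ nhds (0 : ℂ)) (Φ : ℂ → ℝ)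
    (hΦ : ∀ w ∈ Ω, 0 ≤ Φ w) (n m : ℕ) (hn : 0 < n) (hnm : n = 2 * m)
    (c : ℕ → ℂ)
    (hexp : ∃ C > (0 : ℝ), ∃ r > (0 : ℝ), ∀ w : ℂ, ‖w‖ < r →
      ‖(Φ w : ℂ) - ∑ p ∈ Finset.range (n + 1),
          c p * w ^ p * (starRingEnd ℂ w) ^ (n - p)‖ ≤ C * ‖w‖ ^ (n + 1)) :
    (c m).im = 0 ∧ 0 ≤ (c m).re ∧ (c m = 0 → ∀ p ≤ n, c p = 0) := by
  classical
  obtain ⟨C, hC, r, hr, hbound⟩ := hexp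
  obtain ⟨ε, hε, hball⟩ := Metric.mem_nhds_iff.1 hΩ
  set f : ℝ → ℂ := fun θ => ∑ p ∈ Finset.range (n + 1),
    c p * Complex.exp (((2 * p - n : ℤ) : ℂ) * θ * Complex.I) with hf
  -- Step A
  have hS : ∀ (θ t : ℝ), 0 ≤ t →
      ∑ p ∈ Finset.range (n + 1),
        c p * ((t : ℂ) * Complex.exp (θ * Complex.I)) ^ p *
          (starRingEnd ℂ ((t : ℂ) * Complex.exp (θ * Complex.I))) ^ (n - p)
      = (t : ℂ) ^ n * f θ := by
    intro θ t ht
    rw [hf, Finset.mul_sum]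
    refine Finset.sum_congr rfl fun p hp => ?_
    have hpn : p ≤ n := Nat.lt_succ_iff.mp (Finset.mem_range.mp hp)
    rw [map_mul, Complex.conj_ofReal, mul_pow, mul_pow]
    have htn : (t : ℂ) ^ p * (t : ℂ) ^ (n - p) = (t : ℂ) ^ n := by
      rw [← pow_add, Nat.add_sub_cancel' hpn]
    calc c p * ((t:ℂ)^p * Complex.exp (θ * Complex.I) ^ p) *
          ((t:ℂ)^(n-p) * (starRingEnd ℂ (Complex.exp (θ * Complex.I))) ^ (n-p))
        = ((t:ℂ)^p * (t:ℂ)^(n-p)) * (c p * (Complex.exp (θ * Complex.I) ^ p *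
            (starRingEnd ℂ (Complex.exp (θ * Complex.I))) ^ (n-p))) := by ring
      _ = (t:ℂ)^n * (c p * Complex.exp (((2 * p - n : ℤ) : ℂ) * θ * Complex.I)) := by
            rw [htn, aux_exp_pow θ n p hpn]
  -- Step B
  have hreal : ∀ θ : ℝ, (f θ).im = 0 ∧ 0 ≤ (f θ).re := by
    intro θ
    have key : ∀ t : ℝ, 0 < t → t < min ε r →
        |(f θ).im| ≤ C * t ∧ -(C * t) ≤ (f θ).re := by
      intro t ht htr
      set w : ℂ := (t : ℂ) * Complex.exp (θ * Complex.I) with hw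
      have hnorm : ‖w‖ = t := by
        rw [hw, norm_mul, Complex.norm_exp_ofReal_mul_I, mul_one,
          show ‖(t:ℂ)‖ = |t| from (Complex.norm_real t).trans (Real.norm_eq_abs t), abs_of_pos ht]
      have hwΩ : w ∈ Ω := by
        apply hball
        rw [Metric.mem_ball, dist_zero_right, hnorm]
        exact htr.trans_le (min_le_left _ _)
      have hΦw : 0 ≤ Φ w := hΦ w hwΩ
      have hb := hbound w (by rw [hnorm]; exact htr.trans_le (min_le_right _ _))
      rw [hS θ t ht.le, hnorm] at hb
      have htn : (0:ℝ) < t ^ n := pow_pos ht n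
      have hcast : ((t:ℂ))^n = ((t^n : ℝ) : ℂ) := by push_cast; ring
      have hre_ : ((t:ℂ)^n).re = t^n := by rw [hcast]; exact Complex.ofReal_re _
      have him_ : ((t:ℂ)^n).im = 0 := by rw [hcast]; exact Complex.ofReal_im _
      constructor
      · have him : |((Φ w : ℂ) - (t : ℂ) ^ n * f θ).im| ≤ C * t ^ (n + 1) :=
          (Complex.abs_im_le_norm _).trans hb
        have h1 : ((Φ w : ℂ) - (t : ℂ) ^ n * f θ).im = -(t ^ n * (f θ).im) := by
          simp [Complex.sub_im, Complex.mul_im, him_, hre_]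
        rw [h1, abs_neg, abs_mul, abs_of_pos htn] at him
        have him' : t ^ n * |(f θ).im| ≤ t ^ n * (C * t) := by
          calc t ^ n * |(f θ).im| ≤ C * t ^ (n+1) := him
            _ = t ^ n * (C * t) := by rw [pow_succ]; ring
        exact (mul_le_mul_iff_right₀ htn).mp him'
      · have hre : |((Φ w : ℂ) - (t : ℂ) ^ n * f θ).re| ≤ C * t ^ (n + 1) :=
          (Complex.abs_re_le_norm _).trans hb
        have h1 : ((Φ w : ℂ) - (t : ℂ) ^ n * f θ).re = Φ w - t ^ n * (f θ).re := by
          simp [Complex.sub_re, Complex.mul_re, him_, hre_]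
        rw [h1] at hre
        have h2 : Φ w - t ^ n * (f θ).re ≤ C * t ^ (n + 1) := (abs_le.mp hre).2
        have h3 : t ^ n * (-(C * t)) ≤ t ^ n * (f θ).re := by
          have : -(C * t ^ (n + 1)) ≤ t ^ n * (f θ).re := by linarith
          calc t ^ n * (-(C * t)) = -(C * t^(n+1)) := by rw [pow_succ]; ring
            _ ≤ t ^ n * (f θ).re := this
        exact (mul_le_mul_iff_right₀ htn).mp h3
    have hsmall : ∀ δ : ℝ, 0 < δ → ∃ t : ℝ, 0 < t ∧ t < min ε r ∧ C * t ≤ δ := by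
      intro δ hδ
      refine ⟨min (min ε r / 2) (δ / C), ?_, ?_, ?_⟩
      · exact lt_min (by positivity) (by positivity)
      · have hmin : 0 < min ε r := lt_min hε hr
        exact (min_le_left _ _).trans_lt (by linarith)
      · calc C * min (min ε r / 2) (δ / C) ≤ C * (δ / C) :=
            mul_le_mul_of_nonneg_left (min_le_right _ _) hC.le
          _ = δ := by field_simp
    constructor
    · have h0 : |(f θ).im| ≤ 0 := by
        refine le_of_forall_pos_le_add fun δ hδ => ?_
        obtain ⟨t, ht, htr, hCt⟩ := hsmall δ hδ
        calc |(f θ).im| ≤ C * t := (key t ht htr).1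
          _ ≤ δ := hCt
          _ = 0 + δ := by ring
      exact abs_nonpos_iff.mp h0
    · have h0 : -(f θ).re ≤ 0 := by
        refine le_of_forall_pos_le_add fun δ hδ => ?_
        obtain ⟨t, ht, htr, hCt⟩ := hsmall δ hδ
        have := (key t ht htr).2
        linarith
      linarith
  -- Step C: discrete Fourier inversion
  set N : ℕ := 2 * n + 1 with hNdef
  have hN0 : (N : ℂ) ≠ 0 := Nat.cast_ne_zero.mpr (by omega)
  have hFour : ∀ q, q ≤ n → (N : ℂ) * c q =
      ∑ k ∈ Finset.range N, f (2 * Real.pi * k / N) *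
        Complex.exp (-(((2 * q - n : ℤ) : ℂ)) * (2 * Real.pi * k / N : ℝ) * Complex.I) := by
    intro q hq
    have hterm : ∀ p k : ℕ,
        Complex.exp (((2 * p - n : ℤ) : ℂ) * ((2 * Real.pi * k / N : ℝ) : ℂ) * Complex.I) *
          Complex.exp (-(((2 * q - n : ℤ) : ℂ)) * ((2 * Real.pi * k / N : ℝ) : ℂ) * Complex.I)
        = Complex.exp ((((2 * p - n : ℤ) - (2 * q - n : ℤ) : ℤ) : ℂ) *
            (2 * Real.pi * Complex.I / N)) ^ k := by
      intro p k
      rw [← Complex.exp_add, ← Complex.exp_nat_mul]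
      congr 1
      push_cast
      field_simp
      ring
    calc (N : ℂ) * c q
        = ∑ p ∈ Finset.range (n + 1), (if p = q then c p * N else 0) := by
          rw [Finset.sum_ite_eq' (Finset.range (n+1)) q (fun p => c p * (N:ℂ))]
          simp [Finset.mem_range, Nat.lt_succ_iff, hq, mul_comm]
      _ = ∑ p ∈ Finset.range (n + 1), c p * ∑ k ∈ Finset.range N,
            Complex.exp ((((2 * p - n : ℤ) - (2 * q - n : ℤ) : ℤ) : ℂ) *
              (2 * Real.pi * Complex.I / N)) ^ k := by
          refine Finset.sum_congr rfl fun p hp => ?_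
          have hpn : p ≤ n := Nat.lt_succ_iff.mp (Finset.mem_range.mp hp)
          by_cases hpq : p = q
          · subst hpq
            simp only [if_pos rfl, sub_self, Int.cast_zero, zero_mul, Complex.exp_zero,
              one_pow, Finset.sum_const, Finset.card_range, nsmul_eq_mul, mul_one, if_true]
          · rw [if_neg hpq]
            have hd0 : (2 * (p:ℤ) - n) - (2 * (q:ℤ) - n) ≠ 0 := by
              intro h; apply hpq; omega
            have hdN : ((2 * (p:ℤ) - n) - (2 * (q:ℤ) - n)).natAbs < N := by
              have : ((2 * (p:ℤ) - n) - (2 * (q:ℤ) - n)) = 2 * ((p:ℤ) - q) := by ring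
              rw [this]
              have : (2 * ((p:ℤ) - q)).natAbs = 2 * ((p:ℤ) - q).natAbs := by
                rw [Int.natAbs_mul]; rfl
              omega
            rw [aux_geom N _ hd0 hdN, mul_zero]
      _ = ∑ p ∈ Finset.range (n + 1), ∑ k ∈ Finset.range N,
            c p * (Complex.exp (((2 * p - n : ℤ) : ℂ) * ((2 * Real.pi * k / N : ℝ) : ℂ) * Complex.I) *
              Complex.exp (-(((2 * q - n : ℤ) : ℂ)) * ((2 * Real.pi * k / N : ℝ) : ℂ) * Complex.I)) := by
          refine Finset.sum_congr rfl fun p hp => ?_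
          rw [Finset.mul_sum]
          refine Finset.sum_congr rfl fun k hk => ?_
          rw [hterm p k]
      _ = ∑ k ∈ Finset.range N, f (2 * Real.pi * k / N) *
            Complex.exp (-(((2 * q - n : ℤ) : ℂ)) * (2 * Real.pi * k / N : ℝ) * Complex.I) := by
          rw [Finset.sum_comm]
          refine Finset.sum_congr rfl fun k hk => ?_
          rw [hf, Finset.sum_mul]
          refine Finset.sum_congr rfl fun p hp => ?_
          ring
  -- Step D: conclusions
  have hdm : (2 * (m:ℤ) - n) = 0 := by omega
  have hFm : (N : ℂ) * c m = ∑ k ∈ Finset.range N, f (2 * Real.pi * k / N) := by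
    rw [hFour m (by omega)]
    refine Finset.sum_congr rfl fun k hk => ?_
    rw [show ((2 * (m:ℕ) - (n:ℕ) : ℤ) : ℂ) = 0 by exact_mod_cast congrArg Int.cast hdm]
    simp
  have hNcm_im : (N : ℝ) * (c m).im = 0 := by
    have := congrArg Complex.im hFm
    rw [show ((N:ℂ) * c m).im = (N:ℝ) * (c m).im by simp, Complex.im_sum] at this
    rw [this]
    exact Finset.sum_eq_zero fun k _ => (hreal _).1
  have hNR : (0:ℝ) < N := by positivity
  have him0 : (c m).im = 0 := by
    rcases mul_eq_zero.mp hNcm_im with h | h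
    · exact absurd h hNR.ne'
    · exact h
  have hre0 : 0 ≤ (c m).re := by
    have := congrArg Complex.re hFm
    rw [show ((N:ℂ) * c m).re = (N:ℝ) * (c m).re by simp [him0], Complex.re_sum] at this
    have hsum : 0 ≤ ∑ k ∈ Finset.range N, (f (2 * Real.pi * k / N)).re :=
      Finset.sum_nonneg fun k _ => (hreal _).2
    nlinarith
  refine ⟨him0, hre0, ?_⟩
  intro hcm q hq
  have hsum0 : ∑ k ∈ Finset.range N, (f (2 * Real.pi * k / N)).re = 0 := by
    have := congrArg Complex.re hFm
    rw [hcm, mul_zero, Complex.re_sum] at this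
    simpa using this.symm
  have hfk0 : ∀ k ∈ Finset.range N, f (2 * Real.pi * k / N) = 0 := by
    intro k hk
    have hre := (Finset.sum_eq_zero_iff_of_nonneg (fun k _ => (hreal _).2)).mp hsum0 k hk
    exact Complex.ext hre (hreal _).1
  have := hFour q hq
  rw [Finset.sum_congr rfl (fun k hk => by rw [hfk0 k hk, zero_mul]), Finset.sum_const_zero] at this
  exact (mul_eq_zero.mp this).resolve_left hN0
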